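/- Let S be a ring, R a subring of S, and I a two-sided ideal of S with R ∩ I = {0} and R + I = S. For every R-homomorphism φ : I → R, the set I_φ = {φ(i) − i : i ∈ I} is a two-sided ideal of S satisfying R ∩ I_φ = {0} and R + I_φ = S. Conversely, if I′ is a two-sided ideal of S with R ∩ I′ = {0} and R + I′ = S, then there exists a unique R-homomorphism φ : I → R such that I′ = I_φ. -/

import Mathlib

/-- An `R`-homomorphism `φ : I → R`, encoded by a function `f : S → S` whose values on
`I` lie in `R` and which is additive, `R`-bilinear and multiplicative on `I` (all
products taken in `S`).  The behavior of `f` outside `I` is irrelevant. -/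
def IsRHomToR {S : Type*} [Ring S] (R : Subring S) (I : TwoSidedIdeal S)
    (f : S → S) : Prop :=
  (∀ i ∈ I, f i ∈ R) ∧
  (∀ i ∈ I, ∀ j ∈ I, f (i + j) = f i + f j) ∧
  (∀ r ∈ R, ∀ i ∈ I, f (r * i) = r * f i) ∧
  (∀ r ∈ R, ∀ i ∈ I, f (i * r) = f i * r) ∧
  (∀ i ∈ I, ∀ j ∈ I, f (i * j) = f i * f j)

/-- Let `R` be a subring of `S` and `I` a two-sided ideal with
`R ∩ I = {0}` and `R + I = S`.  For each `R`-homomorphism `φ : I → R`, the set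
`I_φ = {φ(i) − i : i ∈ I}` is a two-sided ideal of `S` with `R ∩ I_φ = {0}` and
`R + I_φ = S`; conversely every two-sided ideal `I′` with `R ∩ I′ = {0}` and
`R + I′ = S` is of the form `I_φ` for a unique `R`-homomorphism `φ : I → R`. -/
theorem stmt5 {S : Type*} [Ring S] (R : Subring S) (I : TwoSidedIdeal S)
    (hRI : ∀ x : S, x ∈ R → x ∈ I → x = 0)
    (hsum : ∀ s : S, ∃ r ∈ R, ∃ i ∈ I, s = r + i) :
    (∀ f : S → S, IsRHomToR R I f →
      (∃ J : TwoSidedIdeal S, (J : Set S) = {s : S | ∃ i ∈ I, s = f i - i}) ∧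
      (∀ s : S, (∃ i ∈ I, s = f i - i) → s ∈ R → s = 0) ∧
      (∀ s : S, ∃ r ∈ R, ∃ t : S, (∃ i ∈ I, t = f i - i) ∧ s = r + t)) ∧
    (∀ I' : TwoSidedIdeal S, (∀ x : S, x ∈ R → x ∈ I' → x = 0) →
      (∀ s : S, ∃ r ∈ R, ∃ i ∈ I', s = r + i) →
      ∃ f : S → S, IsRHomToR R I f ∧
        (I' : Set S) = {s : S | ∃ i ∈ I, s = f i - i} ∧
        ∀ g : S → S, IsRHomToR R I g →
          (I' : Set S) = {s : S | ∃ i ∈ I, s = g i - i} → ∀ i ∈ I, g i = f i) := by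
  constructor
  · -- forward direction
    intro f hf
    obtain ⟨hfR, hfadd, hfl, hfr, hfmul⟩ := hf
    have hf0 : f 0 = 0 := by
      have h := hfadd 0 I.zero_mem 0 I.zero_mem
      rw [add_zero] at h
      exact (left_eq_add.mp h)
    have hfneg : ∀ i ∈ I, f (-i) = -f i := by
      intro i hi
      have h := hfadd i hi (-i) (I.neg_mem hi)
      rw [add_neg_cancel, hf0] at h
      exact (neg_eq_of_add_eq_zero_right h.symm).symm
    refine ⟨?_, ?_, ?_⟩
    · -- the set is a two-sided ideal
      refine ⟨TwoSidedIdeal.mk' {s : S | ∃ i ∈ I, s = f i - i}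
        ⟨0, I.zero_mem, by rw [hf0, sub_zero]⟩
        (fun {x y} hx hy => ?_) (fun {x} hx => ?_)
        (fun {x y} hy => ?_) (fun {x y} hx => ?_),
        TwoSidedIdeal.coe_mk' _ _ _ _ _ _⟩
      · obtain ⟨i, hi, rfl⟩ := hx
        obtain ⟨j, hj, rfl⟩ := hy
        exact ⟨i + j, I.add_mem hi hj, by rw [hfadd i hi j hj]; noncomm_ring⟩
      · obtain ⟨i, hi, rfl⟩ := hx
        exact ⟨-i, I.neg_mem hi, by rw [hfneg i hi]; noncomm_ring⟩
      · -- left multiplication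
        obtain ⟨i, hi, rfl⟩ := hy
        obtain ⟨r, hr, j, hj, rfl⟩ := hsum x
        have h1 : r * i ∈ I := I.mul_mem_left r i hi
        have h2 : j * f i ∈ I := I.mul_mem_right j (f i) hj
        have h3 : j * i ∈ I := I.mul_mem_right j i hj
        refine ⟨r * i + (-(j * f i) + j * i),
          I.add_mem h1 (I.add_mem (I.neg_mem h2) h3), ?_⟩
        have e1 : f (r * i + (-(j * f i) + j * i))
            = f (r * i) + (f (-(j * f i)) + f (j * i)) := by
          rw [hfadd _ h1 _ (I.add_mem (I.neg_mem h2) h3),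
            hfadd _ (I.neg_mem h2) _ h3]
        rw [e1, hfl r hr i hi, hfneg _ h2, hfr (f i) (hfR i hi) j hj,
          hfmul j hj i hi]
        noncomm_ring
      · -- right multiplication
        obtain ⟨i, hi, rfl⟩ := hx
        obtain ⟨r, hr, j, hj, rfl⟩ := hsum y
        have h1 : i * r ∈ I := I.mul_mem_right i r hi
        have h2 : f i * j ∈ I := I.mul_mem_left (f i) j hj
        have h3 : i * j ∈ I := I.mul_mem_right i j hi
        refine ⟨i * r + (-(f i * j) + i * j),
          I.add_mem h1 (I.add_mem (I.neg_mem h2) h3), ?_⟩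
        have e1 : f (i * r + (-(f i * j) + i * j))
            = f (i * r) + (f (-(f i * j)) + f (i * j)) := by
          rw [hfadd _ h1 _ (I.add_mem (I.neg_mem h2) h3),
            hfadd _ (I.neg_mem h2) _ h3]
        rw [e1, hfr r hr i hi, hfneg _ h2, hfl (f i) (hfR i hi) j hj,
          hfmul i hi j hj]
        noncomm_ring
    · -- R ∩ I_φ = 0
      rintro s ⟨i, hi, rfl⟩ hsR
      have hiR : i ∈ R := by
        have : i = f i - (f i - i) := by noncomm_ring
        rw [this]
        exact R.sub_mem (hfR i hi) hsR
      have : i = 0 := hRI i hiR hi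
      rw [this, hf0, sub_zero]
    · -- R + I_φ = S
      intro s
      obtain ⟨r, hr, i, hi, rfl⟩ := hsum s
      refine ⟨r + f i, R.add_mem hr (hfR i hi), f (-i) - (-i),
        ⟨-i, I.neg_mem hi, rfl⟩, ?_⟩
      rw [hfneg i hi]
      noncomm_ring
  · -- converse direction
    intro I' hRI' hsum'
    set f : S → S := fun s => Classical.choose (hsum' s) with hfdef
    have hspec : ∀ s : S, f s ∈ R ∧ ∃ i ∈ I', s = f s + i :=
      fun s => Classical.choose_spec (hsum' s)
    have hfR : ∀ s : S, f s ∈ R := fun s => (hspec s).1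
    have hcomp : ∀ s : S, s - f s ∈ I' := by
      intro s
      obtain ⟨-, i, hi, heq⟩ := hspec s
      have : s - f s = i := (eq_sub_of_add_eq' heq.symm).symm
      rw [this]; exact hi
    have huniq : ∀ r ∈ R, ∀ i' ∈ I', f (r + i') = r := by
      intro r hr i' hi'
      obtain ⟨hR0, j, hj, heq⟩ := hspec (r + i')
      have hmem : r - f (r + i') ∈ R := R.sub_mem hr hR0
      have hmem' : r - f (r + i') ∈ I' := by
        have : r - f (r + i') = j - i' := by
          rw [sub_eq_sub_iff_add_eq_add, add_comm j]; exact heq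
        rw [this]; exact I'.sub_mem hj hi'
      have := hRI' _ hmem hmem'
      have := sub_eq_zero.mp this
      exact this.symm
    have hfadd : ∀ s t : S, f (s + t) = f s + f t := by
      intro s t
      have e : s + t = (f s + f t) + ((s - f s) + (t - f t)) := by noncomm_ring
      rw [e, huniq _ (R.add_mem (hfR s) (hfR t)) _
        (I'.add_mem (hcomp s) (hcomp t))]
    refine ⟨f, ⟨fun i _ => hfR i, fun i _ j _ => hfadd i j, ?_, ?_, ?_⟩, ?_, ?_⟩
    · intro r hr i _
      have e : r * i = r * f i + r * (i - f i) := by noncomm_ring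
      rw [e, huniq _ (R.mul_mem hr (hfR i)) _ (I'.mul_mem_left r _ (hcomp i))]
    · intro r hr i _
      have e : i * r = f i * r + (i - f i) * r := by noncomm_ring
      rw [e, huniq _ (R.mul_mem (hfR i) hr) _ (I'.mul_mem_right _ r (hcomp i))]
    · intro i _ j _
      have e : i * j = f i * f j +
          (f i * (j - f j) + ((i - f i) * f j + (i - f i) * (j - f j))) := by noncomm_ring
      rw [e, huniq _ (R.mul_mem (hfR i) (hfR j)) _
        (I'.add_mem (I'.mul_mem_left _ _ (hcomp j))
          (I'.add_mem (I'.mul_mem_right _ _ (hcomp i))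
            (I'.mul_mem_right _ _ (hcomp i))))]
    · -- I' = I_φ
      ext x
      simp only [SetLike.mem_coe, Set.mem_setOf_eq]
      constructor
      · intro hx
        obtain ⟨r, hr, i, hi, heq⟩ := hsum x
        refine ⟨-i, I.neg_mem hi, ?_⟩
        have e : -i = r + (-x) := by rw [heq]; abel
        rw [e, huniq r hr (-x) (I'.neg_mem hx)]
        rw [heq]; noncomm_ring
      · rintro ⟨i, hi, rfl⟩
        have : f i - i = -(i - f i) := by noncomm_ring
        rw [this]
        exact I'.neg_mem (hcomp i)
    · -- uniqueness
      intro g hg hgset i hi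
      have hgmem : g i - i ∈ I' := by
        have : g i - i ∈ {s : S | ∃ j ∈ I, s = g j - j} := ⟨i, hi, rfl⟩
        rw [← hgset] at this
        exact this
      have e : i = g i + (-(g i - i)) := by noncomm_ring
      have h := huniq (g i) (hg.1 i hi) (-(g i - i)) (I'.neg_mem hgmem)
      rw [← e] at h
      exact h.symm
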